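/- Let w be a permutation of {1,...,n} (no sign changes) with w(n) = p+1, and let w' be a signed permutation that acts separately as signed permutations on {1,...,p} and {p+2,...,n} and sends p+1 to ±(p+1) with an even total number of sign changes. Then in the polynomial ring ℚ[Y_1,...,Y_n], applying the substitution X_i ↦ Y_{w'(w(i))} (with Y_{p+1} ↦ 0 and Y_{-j} = -Y_j) to the polynomial X_1···X_{n-1}·∏_{i ≤ p < p+1 < j}(X_{w^{-1}(i)} - Y_j)(X_{w^{-1}(i)} + Y_j) yields (-1)^{m} ∏_{i ≠ p+1} Y_i · ∏_{i ≤ p, j ≥ p+2}(Y_i + Y_j)(Y_i - Y_j), where m = #{i ≠ p+1 : w'(i) < 0}. If instead w' is a signed permutation not of the above form (either w'(p+1) ≠ ±(p+1), or w' fails to preserve the sets {±1,...,±p} and {±(p+2),...,±n}), then the same substitution yields 0. -/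

import Mathlib

open Finset MvPolynomial

/-- The value `Y_{w'(a)}` of the substitution for the signed permutation
`w' = (σ', ε')`, with the conventions `Y_{-j} = -Y_j` and `Y_{p+1} = 0`
(index `p` is the 0-indexed version of `p+1`). -/
noncomputable def sval (n p : ℕ) (h : p < n) (σ' : Equiv.Perm (Fin n))
    (ε' : Fin n → Bool) (a : Fin n) : MvPolynomial (Fin n) ℚ :=
  if σ' a = (⟨p, h⟩ : Fin n) then 0
  else if ε' a then -X (σ' a) else X (σ' a)

/-- applying the substitution `X_i ↦ Y_{w'(w(i))}` (with
`Y_{p+1} ↦ 0`, `Y_{-j} = -Y_j`) to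
`X_1⋯X_{n-1} ∏_{i ≤ p < p+1 < j} (X_{w⁻¹(i)} - Y_j)(X_{w⁻¹(i)} + Y_j)` yields
`(-1)^m ∏_{i ≠ p+1} Y_i ∏_{i ≤ p, j ≥ p+2} (Y_i + Y_j)(Y_i - Y_j)` when `w'`
is in `W_K`-form, and `0` otherwise.  Here `w` is an unsigned permutation with
`w(n) = p+1`, so `X_{w⁻¹(i)}` substitutes to `Y_{w'(i)}`. -/
theorem closed_orbit_restriction_typeD (p q : ℕ) (hq : 1 ≤ q)
    (w : Equiv.Perm (Fin (p + q)))
    (hw : w ⟨p + q - 1, by omega⟩ = ⟨p, by omega⟩)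
    (σ' : Equiv.Perm (Fin (p + q))) (ε' : Fin (p + q) → Bool) :
    ((∀ a : Fin (p + q), a.val < p ↔ (σ' a).val < p) →
      σ' ⟨p, by omega⟩ = ⟨p, by omega⟩ →
      Even ((Finset.univ.filter fun a : Fin (p + q) => ε' a = true).card) →
      (∏ i ∈ Finset.univ.filter (fun i : Fin (p + q) => i.val < p + q - 1),
          sval (p + q) p (by omega) σ' ε' (w i)) *
        ∏ a ∈ Finset.univ.filter (fun a : Fin (p + q) => a.val < p),
          ∏ b ∈ Finset.univ.filter (fun b : Fin (p + q) => p + 1 ≤ b.val),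
            ((sval (p + q) p (by omega) σ' ε' a - X b) *
              (sval (p + q) p (by omega) σ' ε' a + X b))
      = (-1 : MvPolynomial (Fin (p + q)) ℚ) ^
            ((Finset.univ.filter fun i : Fin (p + q) =>
              i ≠ (⟨p, by omega⟩ : Fin (p + q)) ∧ ε' i = true).card) *
          (∏ i ∈ Finset.univ.filter
              (fun i : Fin (p + q) => i ≠ (⟨p, by omega⟩ : Fin (p + q))), X i) *
          ∏ a ∈ Finset.univ.filter (fun a : Fin (p + q) => a.val < p),
            ∏ b ∈ Finset.univ.filter (fun b : Fin (p + q) => p + 1 ≤ b.val),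
              ((X a + X b) * (X a - X b))) ∧
    (¬ (σ' ⟨p, by omega⟩ = ⟨p, by omega⟩ ∧
        ∀ a : Fin (p + q), (a.val < p ↔ (σ' a).val < p)) →
      (∏ i ∈ Finset.univ.filter (fun i : Fin (p + q) => i.val < p + q - 1),
          sval (p + q) p (by omega) σ' ε' (w i)) *
        ∏ a ∈ Finset.univ.filter (fun a : Fin (p + q) => a.val < p),
          ∏ b ∈ Finset.univ.filter (fun b : Fin (p + q) => p + 1 ≤ b.val),
            ((sval (p + q) p (by omega) σ' ε' a - X b) *
              (sval (p + q) p (by omega) σ' ε' a + X b)) = 0) := by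
  have hpn : p < p + q := by omega
  constructor
  · intro hblock hfix _
    have hfix' : ∀ a : Fin (p + q), σ' a = ⟨p, hpn⟩ ↔ a = ⟨p, hpn⟩ := fun a =>
      ⟨fun h => σ'.injective (h.trans hfix.symm), fun h => h ▸ hfix⟩
    have h1 : (∏ i ∈ Finset.univ.filter (fun i : Fin (p + q) => i.val < p + q - 1),
          sval (p + q) p hpn σ' ε' (w i))
        = ∏ a ∈ Finset.univ.filter (fun a : Fin (p + q) => a ≠ ⟨p, hpn⟩),
            sval (p + q) p hpn σ' ε' a := by
      apply Finset.prod_bij (fun i _ => w i)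
      · intro i hi
        simp only [Finset.mem_filter, Finset.mem_univ, true_and] at hi ⊢
        intro h
        have h2 : i = ⟨p + q - 1, by omega⟩ := w.injective (h.trans hw.symm)
        have := congrArg Fin.val h2
        simp at this
        omega
      · intro i hi j hj h
        exact w.injective h
      · intro b hb
        simp only [Finset.mem_filter, Finset.mem_univ, true_and] at hb
        refine ⟨w.symm b, ?_, by simp⟩
        simp only [Finset.mem_filter, Finset.mem_univ, true_and]
        have h1 : w.symm b ≠ ⟨p + q - 1, by omega⟩ := by
          intro h
          apply hb
          rw [← w.apply_symm_apply b, h, hw]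
        have h2 : (w.symm b).val < p + q := (w.symm b).isLt
        have h3 : (w.symm b).val ≠ p + q - 1 := fun h => h1 (Fin.ext h)
        omega
      · intro i hi; rfl
    have h2 : ∀ a : Fin (p + q), a ≠ (⟨p, hpn⟩ : Fin (p + q)) →
        sval (p + q) p hpn σ' ε' a
          = (if ε' a then (-1 : MvPolynomial (Fin (p + q)) ℚ) else 1) * X (σ' a) := by
      intro a ha
      rw [sval, if_neg (fun h => ha ((hfix' a).mp h))]
      by_cases h : ε' a <;> simp [h]
    have h3 : (∏ a ∈ Finset.univ.filter (fun a : Fin (p + q) => a ≠ ⟨p, hpn⟩),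
          X (σ' a) : MvPolynomial (Fin (p + q)) ℚ)
        = ∏ i ∈ Finset.univ.filter (fun i : Fin (p + q) => i ≠ ⟨p, hpn⟩), X i := by
      apply Finset.prod_bij (fun a _ => σ' a)
      · intro a ha
        simp only [Finset.mem_filter, Finset.mem_univ, true_and] at ha ⊢
        exact fun h => ha ((hfix' a).mp h)
      · intro a _ b _ h; exact σ'.injective h
      · intro b hb
        simp only [Finset.mem_filter, Finset.mem_univ, true_and] at hb
        refine ⟨σ'.symm b, ?_, by simp⟩
        simp only [Finset.mem_filter, Finset.mem_univ, true_and]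
        intro h
        apply hb
        rw [← σ'.apply_symm_apply b, ((hfix' _).mpr h : σ' (σ'.symm b) = _)]
      · intro a ha; rfl
    have h4 : (∏ a ∈ Finset.univ.filter (fun a : Fin (p + q) => a ≠ ⟨p, hpn⟩),
          sval (p + q) p hpn σ' ε' a)
        = (-1 : MvPolynomial (Fin (p + q)) ℚ) ^
            ((Finset.univ.filter fun i : Fin (p + q) =>
              i ≠ (⟨p, hpn⟩ : Fin (p + q)) ∧ ε' i = true).card) *
          ∏ i ∈ Finset.univ.filter (fun i : Fin (p + q) => i ≠ ⟨p, hpn⟩), X i := by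
      rw [Finset.prod_congr rfl (fun a ha => h2 a (by simpa using ha)),
        Finset.prod_mul_distrib, h3]
      congr 1
      rw [Finset.prod_ite, Finset.prod_const, Finset.prod_const, one_pow, mul_one,
        Finset.filter_filter]
    have h5 : ∀ a : Fin (p + q), a.val < p → ∀ b : Fin (p + q),
        ((sval (p + q) p hpn σ' ε' a - X b) * (sval (p + q) p hpn σ' ε' a + X b))
          = (X (σ' a) + X b) * (X (σ' a) - X b) := by
      intro a ha b
      have hlt := (hblock a).mp ha
      have hne : σ' a ≠ (⟨p, hpn⟩ : Fin (p + q)) := by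
        intro h
        rw [h] at hlt
        simp at hlt
      rw [sval, if_neg hne]
      by_cases h : ε' a <;> simp [h] <;> ring
    have h6 : (∏ a ∈ Finset.univ.filter (fun a : Fin (p + q) => a.val < p),
          ∏ b ∈ Finset.univ.filter (fun b : Fin (p + q) => p + 1 ≤ b.val),
            ((sval (p + q) p hpn σ' ε' a - X b) *
              (sval (p + q) p hpn σ' ε' a + X b)))
        = ∏ a ∈ Finset.univ.filter (fun a : Fin (p + q) => a.val < p),
            ∏ b ∈ Finset.univ.filter (fun b : Fin (p + q) => p + 1 ≤ b.val),
              ((X a + X b) * (X a - X b)) := by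
      rw [Finset.prod_congr rfl (fun a ha => Finset.prod_congr rfl
        (fun b _ => h5 a (by simpa using ha) b))]
      apply Finset.prod_bij (fun a _ => σ' a)
      · intro a ha
        simp only [Finset.mem_filter, Finset.mem_univ, true_and] at ha ⊢
        exact (hblock a).mp ha
      · intro a _ b _ h; exact σ'.injective h
      · intro b hb
        simp only [Finset.mem_filter, Finset.mem_univ, true_and] at hb
        refine ⟨σ'.symm b, ?_, by simp⟩
        simp only [Finset.mem_filter, Finset.mem_univ, true_and]
        have := (hblock (σ'.symm b)).mpr (by rwa [σ'.apply_symm_apply])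
        exact this
      · intro a ha; rfl
    rw [h1, h4, h6]
  · intro hbad
    by_cases hfix : σ' ⟨p, hpn⟩ = (⟨p, hpn⟩ : Fin (p + q))
    · have hex : ∃ a : Fin (p + q), a.val < p ∧ ¬ (σ' a).val < p := by
        by_contra hc
        push_neg at hc
        apply hbad
        refine ⟨hfix, fun a => ⟨fun h => hc a h, fun h => ?_⟩⟩
        have himg : (Finset.univ.filter (fun a : Fin (p + q) => a.val < p)).image σ'
            = Finset.univ.filter (fun a : Fin (p + q) => a.val < p) := by
          apply Finset.eq_of_subset_of_card_le
          · intro x hx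
            simp only [Finset.mem_image, Finset.mem_filter, Finset.mem_univ, true_and] at hx ⊢
            obtain ⟨a, ha, rfl⟩ := hx
            exact hc a ha
          · rw [Finset.card_image_of_injective _ σ'.injective]
        have : σ' a ∈ (Finset.univ.filter (fun a : Fin (p + q) => a.val < p)).image σ' := by
          rw [himg]; simp [h]
        simp only [Finset.mem_image, Finset.mem_filter, Finset.mem_univ, true_and] at this
        obtain ⟨a', ha', he⟩ := this
        rwa [← σ'.injective he]
      obtain ⟨a, ha, hna⟩ := hex
      have hbP : σ' a ≠ (⟨p, hpn⟩ : Fin (p + q)) := by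
        intro h
        have : a = ⟨p, hpn⟩ := σ'.injective (h.trans hfix.symm)
        rw [this] at ha
        simp at ha
      have hbval : p + 1 ≤ (σ' a).val := by
        have h1 : (σ' a).val ≠ p := fun h => hbP (Fin.ext h)
        omega
      have hz : (∏ a ∈ Finset.univ.filter (fun a : Fin (p + q) => a.val < p),
          ∏ b ∈ Finset.univ.filter (fun b : Fin (p + q) => p + 1 ≤ b.val),
            ((sval (p + q) p hpn σ' ε' a - X b) *
              (sval (p + q) p hpn σ' ε' a + X b))) = 0 := by
        apply Finset.prod_eq_zero (i := a) (by simp [ha])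
        apply Finset.prod_eq_zero (i := σ' a) (by simp only [Finset.mem_filter, Finset.mem_univ, true_and]; exact hbval)
        rw [sval, if_neg hbP]
        by_cases h : ε' a <;> simp [h] <;> ring
      rw [hz, mul_zero]
    · have hz : (∏ i ∈ Finset.univ.filter (fun i : Fin (p + q) => i.val < p + q - 1),
          sval (p + q) p hpn σ' ε' (w i)) = 0 := by
        apply Finset.prod_eq_zero (i := w.symm (σ'.symm ⟨p, hpn⟩))
        · simp only [Finset.mem_filter, Finset.mem_univ, true_and]
          have h1 : w.symm (σ'.symm ⟨p, hpn⟩) ≠ ⟨p + q - 1, by omega⟩ := by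
            intro h
            apply hfix
            have h2 : σ'.symm ⟨p, hpn⟩ = (⟨p, hpn⟩ : Fin (p + q)) := by
              have h3 := congrArg w h
              rwa [w.apply_symm_apply, hw] at h3
            exact (congrArg σ' h2.symm).trans (σ'.apply_symm_apply _)
          have h2 := (w.symm (σ'.symm ⟨p, hpn⟩)).isLt
          have h3 : (w.symm (σ'.symm ⟨p, hpn⟩)).val ≠ p + q - 1 := fun h => h1 (Fin.ext h)
          omega
        · rw [w.apply_symm_apply, sval, if_pos (σ'.apply_symm_apply ⟨p, hpn⟩)]
      rw [hz, zero_mul]
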